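/- Let {a_ν} be a non-negative decreasing sequence, α > 0, λ ∈ ℝ, and p ≥ 1. Then there exist constants C_1, C_2 > 0 depending only on α, λ, p such that for every positive integer n, C_1 ∑_{μ=1}^{n} μ^{α-1} (a_μ μ^{λ+1})^p ≤ ∑_{μ=1}^{n} μ^{α-1} (∑_{ν=μ}^{n} a_ν ν^λ)^p ≤ C_2 ∑_{μ=1}^{n} μ^{α-1} (a_μ μ^{λ+1})^p. -/

import Mathlib

open Finset

private lemma mvt_upper {p x y : ℝ} (hp : 1 ≤ p) (hy : 0 ≤ y) (hxy : y ≤ x) :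
    x ^ p - y ^ p ≤ p * (x - y) * x ^ (p - 1) := by
  rcases eq_or_lt_of_le hxy with h | h
  · subst h; simp
  have hcont : ContinuousOn (fun t : ℝ => t ^ p) (Set.Icc y x) := fun t _ =>
    (Real.continuousAt_rpow_const t p (Or.inr (by linarith))).continuousWithinAt
  have hderiv : ∀ t ∈ Set.Ioo y x, HasDerivAt (fun t : ℝ => t ^ p) (p * t ^ (p - 1)) t :=
    fun t _ => Real.hasDerivAt_rpow_const (Or.inr hp)
  obtain ⟨c, hc, hceq⟩ := exists_hasDerivAt_eq_slope (fun t : ℝ => t ^ p) _ h hcont hderiv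
  have hc0 : 0 ≤ c := le_trans hy hc.1.le
  have heq : x ^ p - y ^ p = p * c ^ (p - 1) * (x - y) := by
    rw [eq_comm, ← eq_div_iff (by linarith : x - y ≠ 0)]
    simpa using hceq
  have hcb : c ^ (p - 1) ≤ x ^ (p - 1) := Real.rpow_le_rpow hc0 hc.2.le (by linarith)
  have hp0 : (0:ℝ) ≤ p := by linarith
  nlinarith [mul_le_mul_of_nonneg_left hcb hp0]

private lemma mvt_lower {p x y : ℝ} (hp : 0 < p) (hp1 : p ≤ 1) (hy : 0 < y) (hxy : y ≤ x) :
    p * (x - y) * x ^ (p - 1) ≤ x ^ p - y ^ p := by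
  rcases eq_or_lt_of_le hxy with h | h
  · subst h; simp
  have hcont : ContinuousOn (fun t : ℝ => t ^ p) (Set.Icc y x) := fun t _ =>
    (Real.continuousAt_rpow_const t p (Or.inr hp.le)).continuousWithinAt
  have hderiv : ∀ t ∈ Set.Ioo y x, HasDerivAt (fun t : ℝ => t ^ p) (p * t ^ (p - 1)) t :=
    fun t ht => Real.hasDerivAt_rpow_const (Or.inl (by nlinarith [ht.1] : t ≠ 0))
  obtain ⟨c, hc, hceq⟩ := exists_hasDerivAt_eq_slope (fun t : ℝ => t ^ p) _ h hcont hderiv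
  have hc0 : 0 < c := lt_trans hy hc.1
  have heq : x ^ p - y ^ p = p * c ^ (p - 1) * (x - y) := by
    rw [eq_comm, ← eq_div_iff (by linarith : x - y ≠ 0)]
    simpa using hceq
  have hcb : x ^ (p - 1) ≤ c ^ (p - 1) :=
    Real.rpow_le_rpow_of_nonpos hc0 hc.2.le (by linarith)
  nlinarith [mul_le_mul_of_nonneg_left hcb hp.le]

private lemma pow_diff_lower {p x y : ℝ} (hp : 1 ≤ p) (hy : 0 ≤ y) (hxy : y ≤ x) :
    (x - y) * x ^ (p - 1) ≤ x ^ p - y ^ p := by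
  have hx : 0 ≤ x := hy.trans hxy
  have h1 : x ^ p = x * x ^ (p - 1) := by
    rcases eq_or_lt_of_le hx with h | hx'
    · rw [← h, Real.zero_rpow (by linarith : p ≠ 0), zero_mul]
    · have := Real.rpow_add hx' 1 (p - 1)
      rw [Real.rpow_one] at this
      rw [← this]; ring_nf
  rcases eq_or_lt_of_le hy with h | hy'
  · rw [← h, Real.zero_rpow (by linarith : p ≠ 0)]
    nlinarith [h1]
  · have h2 : y ^ p = y * y ^ (p - 1) := by
      have := Real.rpow_add hy' 1 (p - 1)
      rw [Real.rpow_one] at this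
      rw [← this]; ring_nf
    have h3 : y ^ (p - 1) ≤ x ^ (p - 1) := Real.rpow_le_rpow hy hxy (by linarith)
    nlinarith [mul_le_mul_of_nonneg_left h3 hy]

private lemma weight_sum {α : ℝ} (hα : 0 < α) (ν : ℕ) :
    ∑ μ ∈ Icc 1 ν, (μ : ℝ) ^ (α - 1) ≤ (1 + 1/α) * (ν : ℝ) ^ α := by
  have h1α : (0:ℝ) < 1/α := by positivity
  have hterm : ∀ μ : ℕ, 1 ≤ μ →
      (μ : ℝ) ^ (α - 1) ≤ (1 + 1/α) * ((μ : ℝ) ^ α - ((μ : ℝ) - 1) ^ α) := by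
    intro μ hμ
    have hμR : (1:ℝ) ≤ (μ:ℝ) := by exact_mod_cast hμ
    have hy : (0:ℝ) ≤ (μ:ℝ) - 1 := by linarith
    have hd : (0:ℝ) ≤ (μ:ℝ) ^ α - ((μ:ℝ) - 1) ^ α := by
      have := Real.rpow_le_rpow hy (by linarith : (μ:ℝ) - 1 ≤ (μ:ℝ)) hα.le
      linarith
    rcases le_or_gt 1 α with hα1 | hα1
    · have h := pow_diff_lower hα1 hy (by linarith : (μ:ℝ) - 1 ≤ (μ:ℝ))
      nlinarith [h, hd]
    · rcases eq_or_lt_of_le hμR with h | hμ2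
      · rw [← h]
        simp only [sub_self, Real.one_rpow, Real.zero_rpow hα.ne', sub_zero]
        rw [mul_one]
        linarith
      · have h := mvt_lower hα hα1.le (by linarith : (0:ℝ) < (μ:ℝ) - 1)
          (by linarith : (μ:ℝ) - 1 ≤ (μ:ℝ))
        have h4 : α * (μ:ℝ) ^ (α - 1) ≤ (μ:ℝ) ^ α - ((μ:ℝ) - 1) ^ α := by
          nlinarith [h]
        have h5 : (μ:ℝ) ^ (α - 1) ≤ (1/α) * ((μ:ℝ) ^ α - ((μ:ℝ) - 1) ^ α) := by
          rw [show (1/α) * ((μ:ℝ) ^ α - ((μ:ℝ) - 1) ^ α) = ((μ:ℝ) ^ α - ((μ:ℝ) - 1) ^ α) / α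
            by ring, le_div_iff₀ hα]
          nlinarith [h4]
        have h6 : (1/α) * ((μ:ℝ) ^ α - ((μ:ℝ) - 1) ^ α) ≤
            (1 + 1/α) * ((μ:ℝ) ^ α - ((μ:ℝ) - 1) ^ α) :=
          mul_le_mul_of_nonneg_right (by linarith) hd
        linarith
  have htel : ∑ μ ∈ Icc 1 ν, ((μ:ℝ) ^ α - ((μ:ℝ) - 1) ^ α) = (ν:ℝ) ^ α := by
    rw [← Finset.Ico_add_one_right_eq_Icc, Finset.sum_Ico_eq_sum_range]
    have : ∀ i : ℕ, (((1 + i : ℕ) : ℝ)) ^ α - (((1 + i : ℕ) : ℝ) - 1) ^ α =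
        (((i + 1 : ℕ) : ℝ)) ^ α - (((i : ℕ) : ℝ)) ^ α := by
      intro i; push_cast; ring_nf
    rw [Finset.sum_congr rfl fun i _ => this i, Finset.sum_range_sub (fun k : ℕ => ((k:ℝ)) ^ α)]
    simp [Real.zero_rpow hα.ne']
  calc ∑ μ ∈ Icc 1 ν, (μ : ℝ) ^ (α - 1)
      ≤ ∑ μ ∈ Icc 1 ν, (1 + 1/α) * ((μ:ℝ) ^ α - ((μ:ℝ) - 1) ^ α) :=
        Finset.sum_le_sum fun μ hμ => hterm μ (Finset.mem_Icc.mp hμ).1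
    _ = (1 + 1/α) * (ν:ℝ) ^ α := by rw [← Finset.mul_sum, htel]

private lemma lower_bd (α lam p : ℝ) (hα : 0 < α) (hp : 1 ≤ p)
    (a : ℕ → ℝ) (ha : ∀ ν, 0 ≤ a ν) (hmono : ∀ ν, a (ν + 1) ≤ a ν)
    (n : ℕ) (hn : 1 ≤ n) :
    ((2:ℝ) ^ (-(1 + |lam|))) ^ p / (2 * max 1 ((2:ℝ) ^ (α - 1))) *
        ∑ μ ∈ Icc 1 n, (μ : ℝ) ^ (α - 1) * (a μ * (μ : ℝ) ^ (lam + 1)) ^ p ≤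
      ∑ μ ∈ Icc 1 n, (μ : ℝ) ^ (α - 1) * (∑ ν ∈ Icc μ n, a ν * (ν : ℝ) ^ lam) ^ p := by
  set c := (2:ℝ) ^ (-(1 + |lam|)) with hc
  set K := max 1 ((2:ℝ) ^ (α - 1)) with hK
  have hc0 : 0 < c := Real.rpow_pos_of_pos two_pos _
  have hcp0 : 0 < c ^ p := Real.rpow_pos_of_pos hc0 _
  have hK1 : (1:ℝ) ≤ K := le_max_left _ _
  have hK0 : (0:ℝ) < K := lt_of_lt_of_le one_pos hK1
  have hanti : ∀ i j : ℕ, i ≤ j → a j ≤ a i := fun i j h =>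
    antitone_nat_of_succ_le hmono h
  set σ : ℕ → ℝ := fun μ => ∑ ν ∈ Icc μ n, a ν * (ν:ℝ) ^ lam with hσdef
  have hσ0 : ∀ μ, 0 ≤ σ μ := fun μ => Finset.sum_nonneg fun ν _ =>
    mul_nonneg (ha ν) (Real.rpow_nonneg (Nat.cast_nonneg ν) _)
  have key : ∀ μ ∈ Icc 1 n, (μ:ℝ) ^ (α-1) * (a μ * (μ:ℝ) ^ (lam+1)) ^ p ≤
      (K / c ^ p) * (((((μ+1)/2 : ℕ)):ℝ) ^ (α-1) * σ ((μ+1)/2) ^ p) := by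
    intro μ hμ
    rw [mem_Icc] at hμ
    obtain ⟨hμ1, hμn⟩ := hμ
    set m : ℕ := (μ+1)/2 with hm
    have hm1 : 1 ≤ m := by omega
    have hmμ : m ≤ μ := by omega
    have h2m : μ ≤ 2 * m := by omega
    have hμR : (1:ℝ) ≤ (μ:ℝ) := by exact_mod_cast hμ1
    have hμ0 : (0:ℝ) < (μ:ℝ) := by linarith
    have hmR : (0:ℝ) < (m:ℝ) := by exact_mod_cast hm1
    have h2mR : (μ:ℝ) ≤ 2 * (m:ℝ) := by exact_mod_cast h2m
    have hmμR : (m:ℝ) ≤ (μ:ℝ) := by exact_mod_cast hmμ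
    -- pointwise bound inside the block
    have hblock : ∀ ν ∈ Icc m μ,
        a μ * ((2:ℝ) ^ (-|lam|) * (μ:ℝ) ^ lam) ≤ a ν * (ν:ℝ) ^ lam := by
      intro ν hν
      rw [mem_Icc] at hν
      have hν1 : 1 ≤ ν := le_trans hm1 hν.1
      have hνR : (0:ℝ) < (ν:ℝ) := by exact_mod_cast hν1
      have hνμ : (ν:ℝ) ≤ (μ:ℝ) := by exact_mod_cast hν.2
      have h2ν : (μ:ℝ) ≤ 2 * (ν:ℝ) := by
        have : (m:ℝ) ≤ (ν:ℝ) := by exact_mod_cast hν.1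
        linarith
      have haν : a μ ≤ a ν := hanti ν μ hν.2
      have hnl : (2:ℝ) ^ (-|lam|) * (μ:ℝ) ^ lam ≤ (ν:ℝ) ^ lam := by
        rcases le_or_gt 0 lam with hl | hl
        · rw [abs_of_nonneg hl]
          have h1 : (2:ℝ) ^ (-lam) * (μ:ℝ) ^ lam = ((μ:ℝ)/2) ^ lam := by
            rw [Real.div_rpow hμ0.le (by norm_num), Real.rpow_neg (by norm_num)]
            ring
          rw [h1]
          exact Real.rpow_le_rpow (by linarith) (by linarith) hl
        · rw [abs_of_neg hl, neg_neg]
          have h1 : (2:ℝ) ^ lam ≤ 1 :=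
            Real.rpow_le_one_of_one_le_of_nonpos (by norm_num) hl.le
          have h2 : (μ:ℝ) ^ lam ≤ (ν:ℝ) ^ lam :=
            Real.rpow_le_rpow_of_nonpos hνR hνμ hl.le
          have h3 : (0:ℝ) ≤ (μ:ℝ) ^ lam := Real.rpow_nonneg hμ0.le _
          nlinarith
      exact mul_le_mul haν hnl
        (mul_nonneg (Real.rpow_nonneg (by norm_num) _) (Real.rpow_nonneg hμ0.le _))
        (ha ν)
    -- block sum lower bound
    have hcard : ((Icc m μ).card : ℝ) = (μ:ℝ) + 1 - (m:ℝ) := by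
      rw [Nat.card_Icc]
      have : μ + 1 - m = μ + 1 - m := rfl
      push_cast [Nat.cast_sub (by omega : m ≤ μ + 1)]
      ring
    have hblocksum :
        ((Icc m μ).card : ℝ) * (a μ * ((2:ℝ) ^ (-|lam|) * (μ:ℝ) ^ lam)) ≤ σ m := by
      have h1 := Finset.card_nsmul_le_sum (Icc m μ)
        (fun ν => a ν * (ν:ℝ) ^ lam) _ hblock
      rw [nsmul_eq_mul] at h1
      refine le_trans h1 ?_
      apply Finset.sum_le_sum_of_subset_of_nonneg
      · exact Finset.Icc_subset_Icc_right hμn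
      · intro ν _ _
        exact mul_nonneg (ha ν) (Real.rpow_nonneg (Nat.cast_nonneg ν) _)
    have hL2 : c * (a μ * (μ:ℝ) ^ (lam+1)) ≤ σ m := by
      have hcsplit : c = (1/2) * (2:ℝ) ^ (-|lam|) := by
        rw [hc, show -(1 + |lam|) = (-1) + (-|lam|) by ring,
          Real.rpow_add (by norm_num : (0:ℝ) < 2), Real.rpow_neg_one]
        norm_num
      have hμsplit : (μ:ℝ) ^ (lam+1) = (μ:ℝ) ^ lam * (μ:ℝ) := by
        rw [Real.rpow_add hμ0, Real.rpow_one]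
      have hm2 : 2 * m ≤ μ + 1 := by omega
      have hm2R : 2 * (m:ℝ) ≤ (μ:ℝ) + 1 := by exact_mod_cast hm2
      have hcardge : (μ:ℝ)/2 ≤ ((Icc m μ).card : ℝ) := by
        rw [hcard]; linarith
      have hnn : 0 ≤ a μ * ((2:ℝ) ^ (-|lam|) * (μ:ℝ) ^ lam) :=
        mul_nonneg (ha μ)
          (mul_nonneg (Real.rpow_nonneg (by norm_num) _) (Real.rpow_nonneg hμ0.le _))
      have h1 : c * (a μ * (μ:ℝ) ^ (lam+1)) =
          ((μ:ℝ)/2) * (a μ * ((2:ℝ) ^ (-|lam|) * (μ:ℝ) ^ lam)) := by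
        rw [hcsplit, hμsplit]; ring
      rw [h1]
      exact le_trans (mul_le_mul_of_nonneg_right hcardge hnn) hblocksum
    -- raise to power p
    have hnn2 : 0 ≤ a μ * (μ:ℝ) ^ (lam+1) :=
      mul_nonneg (ha μ) (Real.rpow_nonneg hμ0.le _)
    have hLa : (a μ * (μ:ℝ) ^ (lam+1)) ^ p ≤ σ m ^ p / c ^ p := by
      rw [← Real.div_rpow (hσ0 m) hc0.le]
      exact Real.rpow_le_rpow hnn2 ((le_div_iff₀ hc0).mpr (by linarith [hL2])) (by linarith)
    have hLb : (μ:ℝ) ^ (α-1) ≤ K * (m:ℝ) ^ (α-1) := by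
      rcases le_or_gt 1 α with hα1 | hα1
      · have h1 : (μ:ℝ) ^ (α-1) ≤ (2*(m:ℝ)) ^ (α-1) :=
          Real.rpow_le_rpow hμ0.le h2mR (by linarith)
        have h2 : (2*(m:ℝ)) ^ (α-1) = (2:ℝ)^(α-1) * (m:ℝ)^(α-1) :=
          Real.mul_rpow (by norm_num) hmR.le
        have h3 : (2:ℝ)^(α-1) ≤ K := le_max_right _ _
        have h4 : (0:ℝ) ≤ (m:ℝ)^(α-1) := Real.rpow_nonneg hmR.le _
        nlinarith
      · have h1 : (μ:ℝ) ^ (α-1) ≤ (m:ℝ) ^ (α-1) :=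
          Real.rpow_le_rpow_of_nonpos hmR hmμR (by linarith)
        have h4 : (0:ℝ) ≤ (m:ℝ)^(α-1) := Real.rpow_nonneg hmR.le _
        nlinarith
    have hrw : (K * (m:ℝ)^(α-1)) * (σ m ^ p / c ^ p) =
        (K / c ^ p) * ((m:ℝ)^(α-1) * σ m ^ p) := by ring
    calc (μ:ℝ) ^ (α-1) * (a μ * (μ:ℝ) ^ (lam+1)) ^ p
        ≤ (K * (m:ℝ)^(α-1)) * (σ m ^ p / c ^ p) :=
          mul_le_mul hLb hLa (Real.rpow_nonneg hnn2 _)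
            (mul_nonneg hK0.le (Real.rpow_nonneg hmR.le _))
      _ = (K / c ^ p) * ((m:ℝ)^(α-1) * σ m ^ p) := hrw
  -- sum the key estimate
  have hg0 : ∀ k : ℕ, 0 ≤ (k:ℝ) ^ (α-1) * σ k ^ p := fun k =>
    mul_nonneg (Real.rpow_nonneg (Nat.cast_nonneg k) _) (Real.rpow_nonneg (hσ0 k) _)
  have hA : ∑ μ ∈ Icc 1 n, (μ:ℝ) ^ (α-1) * (a μ * (μ:ℝ) ^ (lam+1)) ^ p ≤
      (K / c ^ p) * ∑ μ ∈ Icc 1 n, ((((μ+1)/2 : ℕ)):ℝ) ^ (α-1) * σ ((μ+1)/2) ^ p := by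
    rw [Finset.mul_sum]
    exact Finset.sum_le_sum key
  have hL5 : ∑ μ ∈ Icc 1 n, ((((μ+1)/2 : ℕ)):ℝ) ^ (α-1) * σ ((μ+1)/2) ^ p ≤
      2 * ∑ k ∈ Icc 1 n, (k:ℝ) ^ (α-1) * σ k ^ p := by
    set g : ℕ → ℝ := fun k => (k:ℝ) ^ (α-1) * σ k ^ p with hgdef
    show ∑ μ ∈ Icc 1 n, g ((μ+1)/2) ≤ 2 * ∑ k ∈ Icc 1 n, g k
    rw [Finset.sum_comp g (fun μ => (μ+1)/2)]
    have step1 : ∀ b ∈ (Icc 1 n).image (fun μ => (μ+1)/2),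
        (#{x ∈ Icc 1 n | (x+1)/2 = b}) • g b ≤ 2 * g b := by
      intro b _
      rw [nsmul_eq_mul]
      have hcard2 : #{x ∈ Icc 1 n | (x+1)/2 = b} ≤ 2 := by
        have hsub : {x ∈ Icc 1 n | (x+1)/2 = b} ⊆ {2*b-1, 2*b} := by
          intro x hx
          rw [Finset.mem_filter, mem_Icc] at hx
          simp only [Finset.mem_insert, Finset.mem_singleton]
          omega
        calc #{x ∈ Icc 1 n | (x+1)/2 = b} ≤ ({2*b-1, 2*b} : Finset ℕ).card :=
              Finset.card_le_card hsub
          _ ≤ 2 := by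
              apply le_trans (Finset.card_insert_le _ _)
              simp
      exact mul_le_mul_of_nonneg_right (by exact_mod_cast hcard2) (hg0 b)
    refine le_trans (Finset.sum_le_sum step1) (le_trans
      (Finset.sum_le_sum_of_subset_of_nonneg ?_ ?_) (le_of_eq (Finset.mul_sum _ _ _).symm))
    · intro b hb
      rw [Finset.mem_image] at hb
      obtain ⟨x, hx, hxb⟩ := hb
      rw [mem_Icc] at hx ⊢
      omega
    · intro b _ _
      exact mul_nonneg (by norm_num) (hg0 b)
  have hfinal : ∑ μ ∈ Icc 1 n, (μ:ℝ) ^ (α-1) * (a μ * (μ:ℝ) ^ (lam+1)) ^ p ≤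
      (K / c ^ p) * (2 * ∑ k ∈ Icc 1 n, (k:ℝ) ^ (α-1) * σ k ^ p) :=
    le_trans hA (mul_le_mul_of_nonneg_left hL5 (by positivity))
  have hCpos : (0:ℝ) < c ^ p / (2 * K) := by positivity
  calc c ^ p / (2 * K) * ∑ μ ∈ Icc 1 n, (μ:ℝ) ^ (α-1) * (a μ * (μ:ℝ) ^ (lam+1)) ^ p
      ≤ c ^ p / (2 * K) *
        ((K / c ^ p) * (2 * ∑ k ∈ Icc 1 n, (k:ℝ) ^ (α-1) * σ k ^ p)) :=
        mul_le_mul_of_nonneg_left hfinal hCpos.le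
    _ = ∑ k ∈ Icc 1 n, (k:ℝ) ^ (α-1) * σ k ^ p := by
        field_simp
    _ = ∑ μ ∈ Icc 1 n, (μ:ℝ) ^ (α-1) * (∑ ν ∈ Icc μ n, a ν * (ν:ℝ) ^ lam) ^ p := rfl

private lemma upper_bd (α lam p : ℝ) (hα : 0 < α) (hp : 1 ≤ p)
    (a : ℕ → ℝ) (ha : ∀ ν, 0 ≤ a ν)
    (n : ℕ) (hn : 1 ≤ n) :
    ∑ μ ∈ Icc 1 n, (μ : ℝ) ^ (α - 1) * (∑ ν ∈ Icc μ n, a ν * (ν : ℝ) ^ lam) ^ p ≤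
      2 * (1 + 1/α) * (max 1 (2 * (1 + 1/α) * (p - 1))) ^ (p - 1) *
        ∑ μ ∈ Icc 1 n, (μ : ℝ) ^ (α - 1) * (a μ * (μ : ℝ) ^ (lam + 1)) ^ p := by
  have hp0 : (0:ℝ) < p := by linarith
  set Cα : ℝ := 1 + 1/α with hCa
  have hCa0 : (0:ℝ) < Cα := by positivity
  set s : ℝ := max 1 (2 * Cα * (p - 1)) with hs
  have hs1 : (1:ℝ) ≤ s := le_max_left _ _
  have hs0 : (0:ℝ) < s := lt_of_lt_of_le one_pos hs1
  have hs2 : 2 * Cα * (p - 1) ≤ s := le_max_right _ _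
  clear_value Cα s
  set σ : ℕ → ℝ := fun μ => ∑ ν ∈ Icc μ n, a ν * (ν:ℝ) ^ lam with hσdef
  have hσ0 : ∀ μ, 0 ≤ σ μ := fun μ => Finset.sum_nonneg fun ν _ =>
    mul_nonneg (ha ν) (Real.rpow_nonneg (Nat.cast_nonneg ν) _)
  have hrec : ∀ ν, ν ≤ n → σ ν = a ν * (ν:ℝ) ^ lam + σ (ν+1) := by
    intro ν hν
    show σ ν = a ν * (ν:ℝ) ^ lam + ∑ x ∈ Icc (ν+1) n, a x * (x:ℝ) ^ lam
    rw [Finset.Icc_add_one_left_eq_Ioc]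
    exact (Finset.add_sum_Ioc_eq_sum_Icc hν).symm
  have hσmono : ∀ ν, ν ≤ n → σ (ν+1) ≤ σ ν := by
    intro ν hν
    rw [hrec ν hν]
    have : 0 ≤ a ν * (ν:ℝ) ^ lam :=
      mul_nonneg (ha ν) (Real.rpow_nonneg (Nat.cast_nonneg ν) _)
    linarith
  have htop : σ (n+1) = 0 := by
    show (∑ ν ∈ Icc (n+1) n, a ν * (ν:ℝ) ^ lam) = 0
    rw [Finset.Icc_eq_empty (by omega), Finset.sum_empty]
  -- Step U1 : telescoping bound
  have hU1 : ∀ μ ∈ Icc 1 n, σ μ ^ p ≤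
      ∑ ν ∈ Icc μ n, p * (a ν * (ν:ℝ) ^ lam) * σ ν ^ (p-1) := by
    intro μ hμ
    rw [mem_Icc] at hμ
    have htel : σ μ ^ p = ∑ ν ∈ Icc μ n, (σ ν ^ p - σ (ν+1) ^ p) := by
      rw [← Finset.Ico_add_one_right_eq_Icc, Finset.sum_Ico_eq_sum_range]
      simp only [Nat.add_assoc]
      rw [Finset.sum_range_sub' (fun i => σ (μ + i) ^ p) (n + 1 - μ)]
      rw [show μ + (n + 1 - μ) = n + 1 by omega, htop,
        Real.zero_rpow (ne_of_gt hp0)]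
      simp
    rw [htel]
    apply Finset.sum_le_sum
    intro ν hν
    rw [mem_Icc] at hν
    have hd := mvt_upper hp (hσ0 (ν+1)) (hσmono ν hν.2)
    have he : σ ν - σ (ν+1) = a ν * (ν:ℝ) ^ lam := by
      rw [hrec ν hν.2]; ring
    rw [he] at hd
    exact hd
  -- Step U2 : swap sums and apply the weight estimate
  set S : ℝ := ∑ μ ∈ Icc 1 n, (μ:ℝ) ^ (α-1) * σ μ ^ p with hSdef
  set A : ℝ := ∑ μ ∈ Icc 1 n, (μ:ℝ) ^ (α-1) * (a μ * (μ:ℝ) ^ (lam+1)) ^ p with hAdef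
  set T : ℝ := ∑ ν ∈ Icc 1 n, a ν * (ν:ℝ) ^ (lam+α) * σ ν ^ (p-1) with hTdef
  have hS0 : 0 ≤ S := Finset.sum_nonneg fun μ _ =>
    mul_nonneg (Real.rpow_nonneg (Nat.cast_nonneg μ) _) (Real.rpow_nonneg (hσ0 μ) _)
  have hA0 : 0 ≤ A := Finset.sum_nonneg fun μ _ =>
    mul_nonneg (Real.rpow_nonneg (Nat.cast_nonneg μ) _)
      (Real.rpow_nonneg (mul_nonneg (ha μ) (Real.rpow_nonneg (Nat.cast_nonneg μ) _)) _)
  have hSeq : ∑ μ ∈ Icc 1 n, (μ:ℝ) ^ (α-1) * (∑ ν ∈ Icc μ n, a ν * (ν:ℝ) ^ lam) ^ p = S :=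
    rfl
  clear_value σ S A T
  have hU2 : S ≤ p * Cα * T := by
    have h1 : S ≤ ∑ μ ∈ Icc 1 n, ∑ ν ∈ Icc μ n,
        (μ:ℝ) ^ (α-1) * (p * (a ν * (ν:ℝ) ^ lam) * σ ν ^ (p-1)) := by
      rw [hSdef]
      apply Finset.sum_le_sum
      intro μ hμ
      rw [← Finset.mul_sum]
      exact mul_le_mul_of_nonneg_left (hU1 μ hμ)
        (Real.rpow_nonneg (Nat.cast_nonneg μ) _)
    have h2 : ∑ μ ∈ Icc 1 n, ∑ ν ∈ Icc μ n,
        (μ:ℝ) ^ (α-1) * (p * (a ν * (ν:ℝ) ^ lam) * σ ν ^ (p-1)) =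
        ∑ ν ∈ Icc 1 n, ∑ μ ∈ Icc 1 ν,
        (μ:ℝ) ^ (α-1) * (p * (a ν * (ν:ℝ) ^ lam) * σ ν ^ (p-1)) := by
      apply Finset.sum_comm'
      intro x y
      simp only [mem_Icc]
      omega
    have h3 : ∀ ν ∈ Icc 1 n, ∑ μ ∈ Icc 1 ν,
        (μ:ℝ) ^ (α-1) * (p * (a ν * (ν:ℝ) ^ lam) * σ ν ^ (p-1)) ≤
        p * Cα * (a ν * (ν:ℝ) ^ (lam+α) * σ ν ^ (p-1)) := by
      intro ν hν
      rw [mem_Icc] at hν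
      have hν0 : (0:ℝ) < (ν:ℝ) := by exact_mod_cast hν.1
      have hnn : 0 ≤ p * (a ν * (ν:ℝ) ^ lam) * σ ν ^ (p-1) := by
        apply mul_nonneg
        apply mul_nonneg hp0.le
        exact mul_nonneg (ha ν) (Real.rpow_nonneg (Nat.cast_nonneg ν) _)
        exact Real.rpow_nonneg (hσ0 ν) _
      have h4 : ∑ μ ∈ Icc 1 ν,
          (μ:ℝ) ^ (α-1) * (p * (a ν * (ν:ℝ) ^ lam) * σ ν ^ (p-1)) =
          (∑ μ ∈ Icc 1 ν, (μ:ℝ) ^ (α-1)) * (p * (a ν * (ν:ℝ) ^ lam) * σ ν ^ (p-1)) :=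
        (Finset.sum_mul _ _ _).symm
      rw [h4]
      have h5 := mul_le_mul_of_nonneg_right (weight_sum hα ν) hnn
      refine le_trans h5 (le_of_eq ?_)
      rw [Real.rpow_add hν0 lam α]
      rw [hCa]; ring
    calc S ≤ _ := h1
      _ = _ := h2
      _ ≤ ∑ ν ∈ Icc 1 n, p * Cα * (a ν * (ν:ℝ) ^ (lam+α) * σ ν ^ (p-1)) :=
          Finset.sum_le_sum h3
      _ = p * Cα * T := by rw [hTdef, Finset.mul_sum]
  -- Step U3 : Young / weighted AM-GM, pointwise
  have hU3 : ∀ ν ∈ Icc 1 n, a ν * (ν:ℝ) ^ (lam+α) * σ ν ^ (p-1) ≤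
      (p-1)/p * ((ν:ℝ) ^ (α-1) * σ ν ^ p / s) +
      1/p * (s ^ (p-1) * ((ν:ℝ) ^ (α-1) * (a ν * (ν:ℝ) ^ (lam+1)) ^ p)) := by
    intro ν hν
    rw [mem_Icc] at hν
    have hν0 : (0:ℝ) < (ν:ℝ) := by exact_mod_cast hν.1
    set X : ℝ := (ν:ℝ) ^ (α-1) * σ ν ^ p / s with hX
    set Y : ℝ := s ^ (p-1) * ((ν:ℝ) ^ (α-1) * (a ν * (ν:ℝ) ^ (lam+1)) ^ p) with hY
    have hX0 : 0 ≤ X := by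
      apply div_nonneg _ hs0.le
      exact mul_nonneg (Real.rpow_nonneg hν0.le _) (Real.rpow_nonneg (hσ0 ν) _)
    have hY0 : 0 ≤ Y := by
      apply mul_nonneg (Real.rpow_nonneg hs0.le _)
      exact mul_nonneg (Real.rpow_nonneg hν0.le _)
        (Real.rpow_nonneg (mul_nonneg (ha ν) (Real.rpow_nonneg hν0.le _)) _)
    have hgm := Real.geom_mean_le_arith_mean2_weighted
      (div_nonneg (by linarith) hp0.le) (by positivity : (0:ℝ) ≤ 1/p) hX0 hY0
      (by field_simp; ring : (p-1)/p + 1/p = 1)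
    rcases eq_or_lt_of_le (ha ν) with hz | haν
    · -- a ν = 0 : LHS vanishes
      rw [← hz, zero_mul, zero_mul]
      exact add_nonneg (mul_nonneg (div_nonneg (by linarith) hp0.le) hX0)
        (mul_nonneg (by positivity) hY0)
    · -- a ν > 0, hence σ ν > 0
      have hσν : 0 < σ ν := by
        have h6 : a ν * (ν:ℝ) ^ lam ≤ σ ν := by
          rw [hσdef]
          refine Finset.single_le_sum
            (fun i _ => mul_nonneg (ha i) (Real.rpow_nonneg (Nat.cast_nonneg i) _)) ?_
          rw [mem_Icc]; omega
        have : 0 < a ν * (ν:ℝ) ^ lam :=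
          mul_pos haν (Real.rpow_pos_of_pos hν0 _)
        linarith
      have haν1 : 0 < a ν * (ν:ℝ) ^ (lam+1) :=
        mul_pos haν (Real.rpow_pos_of_pos hν0 _)
      have hXpos : 0 < X := by
        rw [hX]
        exact div_pos (mul_pos (Real.rpow_pos_of_pos hν0 _)
          (Real.rpow_pos_of_pos hσν _)) hs0
      have hYpos : 0 < Y := by
        rw [hY]
        exact mul_pos (Real.rpow_pos_of_pos hs0 _)
          (mul_pos (Real.rpow_pos_of_pos hν0 _) (Real.rpow_pos_of_pos haν1 _))
      have hid : X ^ ((p-1)/p) * Y ^ (1/p) = a ν * (ν:ℝ) ^ (lam+α) * σ ν ^ (p-1) := by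
        have hZpos : 0 < a ν * (ν:ℝ) ^ (lam+α) * σ ν ^ (p-1) :=
          mul_pos (mul_pos haν (Real.rpow_pos_of_pos hν0 _))
            (Real.rpow_pos_of_pos hσν _)
        have hLpos : 0 < X ^ ((p-1)/p) * Y ^ (1/p) :=
          mul_pos (Real.rpow_pos_of_pos hXpos _) (Real.rpow_pos_of_pos hYpos _)
        apply Real.log_injOn_pos (Set.mem_Ioi.mpr hLpos) (Set.mem_Ioi.mpr hZpos)
        have l1 : Real.log X = (α-1) * Real.log (ν:ℝ) + p * Real.log (σ ν)
            - Real.log s := by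
          rw [hX, Real.log_div (by positivity) (ne_of_gt hs0),
            Real.log_mul (by positivity) (by positivity),
            Real.log_rpow hν0, Real.log_rpow hσν]
        have l2 : Real.log Y = (p-1) * Real.log s +
            ((α-1) * Real.log (ν:ℝ) + p * (Real.log (a ν) + (lam+1) * Real.log (ν:ℝ))) := by
          rw [hY, Real.log_mul (by positivity) (by positivity),
            Real.log_rpow hs0,
            Real.log_mul (by positivity) (by positivity),
            Real.log_rpow hν0, Real.log_rpow haν1,
            Real.log_mul (ne_of_gt haν) (by positivity),
            Real.log_rpow hν0]
        have l3 : Real.log (a ν * (ν:ℝ) ^ (lam+α) * σ ν ^ (p-1)) =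
            Real.log (a ν) + (lam+α) * Real.log (ν:ℝ) + (p-1) * Real.log (σ ν) := by
          rw [Real.log_mul (by positivity) (by positivity),
            Real.log_mul (ne_of_gt haν) (by positivity),
            Real.log_rpow hν0, Real.log_rpow hσν]
        rw [Real.log_mul (ne_of_gt (Real.rpow_pos_of_pos hXpos _))
            (ne_of_gt (Real.rpow_pos_of_pos hYpos _)),
          Real.log_rpow hXpos, Real.log_rpow hYpos, l1, l2, l3]
        field_simp
        ring
      calc a ν * (ν:ℝ) ^ (lam+α) * σ ν ^ (p-1) = X ^ ((p-1)/p) * Y ^ (1/p) := hid.symm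
        _ ≤ (p-1)/p * X + 1/p * Y := hgm
  -- Step U4 : sum up and absorb
  have hU4 : T ≤ (p-1)/(p*s) * S + s^(p-1)/p * A := by
    have h1 := Finset.sum_le_sum hU3
    rw [hTdef]
    refine le_trans h1 (le_of_eq ?_)
    rw [Finset.sum_add_distrib]
    rw [hSdef, hAdef, Finset.mul_sum, Finset.mul_sum]
    congr 1
    · apply Finset.sum_congr rfl
      intro μ _
      field_simp
      try ring
    · apply Finset.sum_congr rfl
      intro μ _
      field_simp
      try ring
  have hfrac : Cα * (p-1) / s ≤ 1/2 := by
    rw [div_le_iff₀ hs0]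
    nlinarith
  have hmain : S ≤ p * Cα * ((p-1)/(p*s) * S + s^(p-1)/p * A) :=
    le_trans hU2 (mul_le_mul_of_nonneg_left hU4 (by positivity))
  have heq2 : p * Cα * ((p-1)/(p*s) * S + s^(p-1)/p * A) =
      (Cα * (p-1) / s) * S + Cα * s^(p-1) * A := by
    field_simp
  have habs : (Cα * (p-1) / s) * S ≤ (1/2) * S :=
    mul_le_mul_of_nonneg_right hfrac hS0
  have hfin : S ≤ 2 * Cα * s^(p-1) * A := by
    rw [heq2] at hmain
    linarith
  exact hfin


theorem stmt_14 (α lam p : ℝ) (hα : 0 < α) (hp : 1 ≤ p) :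
    ∃ C₁ C₂ : ℝ, 0 < C₁ ∧ 0 < C₂ ∧ ∀ a : ℕ → ℝ, (∀ ν, 0 ≤ a ν) → (∀ ν, a (ν + 1) ≤ a ν) →
      ∀ n : ℕ, 1 ≤ n →
        C₁ * ∑ μ ∈ Icc 1 n, (μ : ℝ) ^ (α - 1) * (a μ * (μ : ℝ) ^ (lam + 1)) ^ p ≤
          ∑ μ ∈ Icc 1 n, (μ : ℝ) ^ (α - 1) * (∑ ν ∈ Icc μ n, a ν * (ν : ℝ) ^ lam) ^ p ∧
        ∑ μ ∈ Icc 1 n, (μ : ℝ) ^ (α - 1) * (∑ ν ∈ Icc μ n, a ν * (ν : ℝ) ^ lam) ^ p ≤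
          C₂ * ∑ μ ∈ Icc 1 n, (μ : ℝ) ^ (α - 1) * (a μ * (μ : ℝ) ^ (lam + 1)) ^ p := by
  have hc0 : (0:ℝ) < (2:ℝ) ^ (-(1 + |lam|)) := Real.rpow_pos_of_pos two_pos _
  have hcp : (0:ℝ) < ((2:ℝ) ^ (-(1 + |lam|))) ^ p := Real.rpow_pos_of_pos hc0 _
  have hK : (0:ℝ) < max 1 ((2:ℝ) ^ (α - 1)) := lt_of_lt_of_le one_pos (le_max_left _ _)
  have hCa : (0:ℝ) < 1 + 1/α := by positivity
  have hs : (0:ℝ) < max 1 (2 * (1 + 1/α) * (p - 1)) :=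
    lt_of_lt_of_le one_pos (le_max_left _ _)
  have hsp : (0:ℝ) < (max 1 (2 * (1 + 1/α) * (p - 1))) ^ (p - 1) :=
    Real.rpow_pos_of_pos hs _
  refine ⟨((2:ℝ) ^ (-(1 + |lam|))) ^ p / (2 * max 1 ((2:ℝ) ^ (α - 1))),
    2 * (1 + 1/α) * (max 1 (2 * (1 + 1/α) * (p - 1))) ^ (p - 1),
    by positivity, by positivity, fun a ha hmono n hn =>
      ⟨lower_bd α lam p hα hp a ha hmono n hn, upper_bd α lam p hα hp a ha n hn⟩⟩
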